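/- Let t₀ ∈ ℂ and let H₁, H₂ : ℂ × ℂ → ℂ be holomorphic on a neighborhood of (0, t₀) with H₁(0, t) = t and H₂(0, t) = t for all t near t₀. Set A_i(t) = ∂H_i/∂ε (0, t) for i = 1, 2. Suppose G₁, G₂ are holomorphic on a neighborhood of (0, t₀) and are local inverses, i.e. H_i(ε, G_i(ε, t)) = t and G_i(ε, H_i(ε, t)) = t for all (ε, t) near (0, t₀). Define the commutator K(ε, t) = H₁(ε, H₂(ε, G₁(ε, G₂(ε, t)))) for (ε, t) near (0, t₀). Then for all t near t₀: K(0, t) = t, ∂K/∂ε (0, t) = 0, and ∂²K/∂ε² (0, t) = 2 (A₁'(t) A₂(t) − A₂'(t) A₁(t)), where A_i' denotes the derivative of A_i with respect to t. -/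

import Mathlib

open Filter

open Topology

private lemma curveDeriv {F : ℂ × ℂ → ℂ} {γ : ℂ → ℂ × ℂ} {v : ℂ × ℂ} {x : ℂ}
    (hF : AnalyticAt ℂ F (γ x)) (hγ : HasDerivAt γ v x) :
    HasDerivAt (fun z => F (γ z)) (fderiv ℂ F (γ x) v) x :=
  hF.differentiableAt.hasFDerivAt.comp_hasDerivAt x hγ

private lemma curveDeriv2 {F : ℂ × ℂ → ℂ} {γ : ℂ → ℂ × ℂ} {v : ℂ × ℂ} {x : ℂ}
    (hF : AnalyticAt ℂ F (γ x)) (hγ : HasDerivAt γ v x) :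
    HasDerivAt (fun z => fderiv ℂ F (γ z)) (fderiv ℂ (fderiv ℂ F) (γ x) v) x :=
  hF.fderiv.differentiableAt.hasFDerivAt.comp_hasDerivAt x hγ

/-- Key jet lemma: first and second `ε`-derivatives of `ε ↦ F (ε, s ε)` at `0`,
when `F (0, ·) = id` near `τ` and `s 0 = τ`. -/
private lemma jet {F : ℂ × ℂ → ℂ} {s : ℂ → ℂ} {τ : ℂ}
    (hF : AnalyticAt ℂ F (0, τ))
    (hFid : ∀ᶠ y in 𝓝 τ, F (0, y) = y)
    (hs : AnalyticAt ℂ s 0) (hs0 : s 0 = τ) :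
    deriv (fun ε => F (ε, s ε)) 0
      = deriv (fun ε => F (ε, τ)) 0 + deriv s 0 ∧
    iteratedDeriv 2 (fun ε => F (ε, s ε)) 0
      = iteratedDeriv 2 (fun ε => F (ε, τ)) 0
        + 2 * deriv (fun y => deriv (fun ε => F (ε, y)) 0) τ * deriv s 0
        + iteratedDeriv 2 s 0 := by
  set c := deriv s 0 with hc
  set L := fderiv ℂ F with hLdef
  set Q := fderiv ℂ (fderiv ℂ F) (0, τ) with hQdef
  have hFev : ∀ᶠ p in 𝓝 ((0:ℂ), τ), AnalyticAt ℂ F p := hF.eventually_analyticAt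
  have hsev : ∀ᶠ ε in 𝓝 (0:ℂ), AnalyticAt ℂ s ε := hs.eventually_analyticAt
  have hs_hd : HasDerivAt s c 0 := hs.differentiableAt.hasDerivAt
  have hγ : ∀ {ε d : ℂ}, HasDerivAt s d ε → HasDerivAt (fun x : ℂ => (x, s x)) (1, d) ε :=
    fun h => (hasDerivAt_id _).prodMk h
  have hγ0 : HasDerivAt (fun x : ℂ => (x, s x)) ((1:ℂ), c) 0 := hγ hs_hd
  have hFyev : ∀ᶠ y in 𝓝 τ, AnalyticAt ℂ F (0, y) := by
    have h : Filter.Tendsto (fun y : ℂ => ((0:ℂ), y)) (𝓝 τ) (𝓝 ((0:ℂ), τ)) :=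
      (continuous_const.prodMk continuous_id).tendsto' τ _ rfl
    exact h.eventually hFev
  have hone : (fun y => L (0, y) ((0:ℂ), (1:ℂ))) =ᶠ[𝓝 τ] fun _ => (1:ℂ) := by
    filter_upwards [hFyev, hFid.eventually_nhds] with y hy hid
    have h1 : HasDerivAt (fun z => F (0, z)) (L (0, y) (0, 1)) y :=
      curveDeriv (γ := fun z : ℂ => ((0:ℂ), z)) hy
        ((hasDerivAt_const y (0:ℂ)).prodMk (hasDerivAt_id y))
    have h2 : deriv (fun z => F (0, z)) y = 1 := by
      rw [Filter.EventuallyEq.deriv_eq (f := id) hid, deriv_id]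
    rw [← h1.deriv, h2]
  have ha : (fun y => deriv (fun ε => F (ε, y)) 0) =ᶠ[𝓝 τ]
      fun y => L (0, y) ((1:ℂ), (0:ℂ)) := by
    filter_upwards [hFyev] with y hy
    exact (curveDeriv (γ := fun x : ℂ => (x, y)) hy
      ((hasDerivAt_id 0).prodMk (hasDerivAt_const 0 y))).deriv
  have hsplit : ((1:ℂ), c) = ((1:ℂ), (0:ℂ)) + c • ((0:ℂ), (1:ℂ)) := by
    simp [Prod.ext_iff]
  have honeτ : L (0, τ) (0, 1) = 1 := hone.eq_of_nhds
  have haτ : deriv (fun ε => F (ε, τ)) 0 = L (0, τ) (1, 0) := ha.eq_of_nhds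
  -- first derivative
  have hFγ : AnalyticAt ℂ F ((0:ℂ), s 0) := by rw [hs0]; exact hF
  have hd1 : HasDerivAt (fun ε => F (ε, s ε)) (L (0, τ) (1, c)) 0 := by
    have h := curveDeriv (γ := fun x : ℂ => (x, s x)) hFγ hγ0
    simpa only [hs0] using h
  have first : deriv (fun ε => F (ε, s ε)) 0 = deriv (fun ε => F (ε, τ)) 0 + c := by
    rw [hd1.deriv, hsplit, map_add, map_smul, honeτ, haτ, smul_eq_mul, mul_one]
  refine ⟨first, ?_⟩
  -- second derivative
  obtain ⟨t, ht, hta⟩ := hs.exists_mem_nhds_analyticOnNhd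
  have hds : AnalyticAt ℂ (deriv s) 0 := hta.deriv 0 (mem_of_mem_nhds ht)
  set c₂ := deriv (deriv s) 0 with hc₂
  have hev1 : deriv (fun x => F (x, s x)) =ᶠ[𝓝 (0:ℂ)]
      fun ε => L (ε, s ε) ((1:ℂ), deriv s ε) := by
    have htend : Filter.Tendsto (fun x : ℂ => (x, s x)) (𝓝 0) (𝓝 ((0:ℂ), τ)) := by
      rw [← hs0]; exact continuousAt_id.prodMk hs.continuousAt
    filter_upwards [htend.eventually hFev, hsev] with ε hε hsε
    exact (curveDeriv (γ := fun x : ℂ => (x, s x)) hε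
      (hγ hsε.differentiableAt.hasDerivAt)).deriv
  have hLd : HasDerivAt (fun ε => L (ε, s ε)) (Q (1, c)) 0 := by
    have h := curveDeriv2 (γ := fun x : ℂ => (x, s x)) hFγ hγ0
    simpa only [hs0] using h
  have hvd : HasDerivAt (fun ε => ((1:ℂ), deriv s ε)) ((0:ℂ), c₂) 0 :=
    (hasDerivAt_const 0 (1:ℂ)).prodMk hds.differentiableAt.hasDerivAt
  have hd2 : HasDerivAt (fun ε => L (ε, s ε) (1, deriv s ε))
      (Q (1, c) (1, c) + L (0, τ) (0, c₂)) 0 := by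
    have h := hLd.clm_apply hvd
    simpa only [hs0] using h
  -- identify the entries of Q
  have hQ11 : deriv (deriv (fun ε => F (ε, τ))) 0 = Q (1, 0) (1, 0) := by
    have hev : deriv (fun x => F (x, τ)) =ᶠ[𝓝 (0:ℂ)] fun ε => L (ε, τ) ((1:ℂ), (0:ℂ)) := by
      have htend : Filter.Tendsto (fun x : ℂ => (x, τ)) (𝓝 0) (𝓝 ((0:ℂ), τ)) :=
        (continuous_id.prodMk continuous_const).tendsto' 0 _ rfl
      filter_upwards [htend.eventually hFev] with ε hε
      exact (curveDeriv (γ := fun x : ℂ => (x, τ)) hε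
        ((hasDerivAt_id ε).prodMk (hasDerivAt_const ε τ))).deriv
    have hLd' : HasDerivAt (fun ε => L (ε, τ)) (Q (1, 0)) 0 :=
      curveDeriv2 (γ := fun x : ℂ => (x, τ)) hF ((hasDerivAt_id 0).prodMk (hasDerivAt_const 0 τ))
    have h3 := (hLd'.clm_apply (hasDerivAt_const 0 ((1:ℂ), (0:ℂ)))).deriv
    rw [hev.deriv_eq, h3]
    simp
  have hLd'' : HasDerivAt (fun y => L (0, y)) (Q (0, 1)) τ :=
    curveDeriv2 (γ := fun y : ℂ => ((0:ℂ), y)) hF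
      ((hasDerivAt_const τ (0:ℂ)).prodMk (hasDerivAt_id τ))
  have hQ21 : deriv (fun y => deriv (fun ε => F (ε, y)) 0) τ = Q (0, 1) (1, 0) := by
    have h3 := (hLd''.clm_apply (hasDerivAt_const τ ((1:ℂ), (0:ℂ)))).deriv
    rw [ha.deriv_eq, h3]
    simp
  have hQ22 : Q (0, 1) (0, 1) = 0 := by
    have h3 := (hLd''.clm_apply (hasDerivAt_const τ ((0:ℂ), (1:ℂ)))).deriv
    have h2 : deriv (fun y => L (0, y) ((0:ℂ), (1:ℂ))) τ = 0 := by
      rw [hone.deriv_eq, deriv_const]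
    rw [h3] at h2
    simpa using h2
  have hsymm : Q (1, 0) (0, 1) = Q (0, 1) (1, 0) :=
    (hF.contDiffAt.isSymmSndFDerivAt (n := (2 : WithTop ℕ∞)) (by simp)) _ _
  have expand : Q (1, c) (1, c)
      = Q (1, 0) (1, 0) + c * Q (1, 0) (0, 1) + c * Q (0, 1) (1, 0)
        + c * (c * Q (0, 1) (0, 1)) := by
    have h1 : Q (1, c) = Q (1, 0) + c • Q (0, 1) := by
      rw [hsplit, map_add, map_smul]
    have h2 : ∀ M : ℂ × ℂ →L[ℂ] ℂ, M (1, c) = M (1, 0) + c * M (0, 1) := by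
      intro M; rw [hsplit, map_add, map_smul, smul_eq_mul]
    rw [h1]
    simp only [ContinuousLinearMap.add_apply, ContinuousLinearMap.coe_smul',
      Pi.smul_apply, smul_eq_mul]
    rw [h2, h2]
    ring
  have hLc₂ : L (0, τ) (0, c₂) = c₂ := by
    have h : ((0:ℂ), c₂) = c₂ • ((0:ℂ), (1:ℂ)) := by simp [Prod.ext_iff]
    rw [h, map_smul, honeτ, smul_eq_mul, mul_one]
  simp only [show (2:ℕ) = 1 + 1 from rfl, iteratedDeriv_succ, iteratedDeriv_one, iteratedDeriv_zero]
  rw [hev1.deriv_eq, hd2.deriv, expand, hLc₂, hQ11, hQ21, hsymm, hQ22, ← hc₂]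
  ring

private lemma const_jet {f : ℂ → ℂ} {y : ℂ} (h : f =ᶠ[𝓝 (0:ℂ)] fun _ => y) :
    deriv f 0 = 0 ∧ iteratedDeriv 2 f 0 = 0 := by
  have h1 : deriv f =ᶠ[𝓝 (0:ℂ)] fun _ => (0:ℂ) := by
    filter_upwards [h.deriv] with x hx
    simpa using hx
  refine ⟨h1.eq_of_nhds, ?_⟩
  simp only [show (2:ℕ) = 1 + 1 from rfl, iteratedDeriv_succ, iteratedDeriv_zero]
  rw [h1.deriv_eq]
  simp

/-- Formula (4mar06): the holonomy along the commutator loop is tangent to the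
identity to first order in `ε`, and its second Melnikov function is the
Wronskian-type determinant of the first Melnikov functions of the two holonomies. -/
theorem commutator_melnikov
    (t₀ : ℂ) (H₁ H₂ G₁ G₂ : ℂ × ℂ → ℂ)
    (U : Set (ℂ × ℂ)) (hU : U ∈ nhds ((0 : ℂ), t₀))
    (hH₁ : AnalyticOnNhd ℂ H₁ U) (hH₂ : AnalyticOnNhd ℂ H₂ U)
    (hG₁ : AnalyticOnNhd ℂ G₁ U) (hG₂ : AnalyticOnNhd ℂ G₂ U)
    (hH₁0 : ∀ᶠ t in nhds t₀, H₁ (0, t) = t)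
    (hH₂0 : ∀ᶠ t in nhds t₀, H₂ (0, t) = t)
    (hinv₁ : ∀ᶠ p : ℂ × ℂ in nhds ((0 : ℂ), t₀),
      H₁ (p.1, G₁ (p.1, p.2)) = p.2 ∧ G₁ (p.1, H₁ (p.1, p.2)) = p.2)
    (hinv₂ : ∀ᶠ p : ℂ × ℂ in nhds ((0 : ℂ), t₀),
      H₂ (p.1, G₂ (p.1, p.2)) = p.2 ∧ G₂ (p.1, H₂ (p.1, p.2)) = p.2)
    (A₁ A₂ : ℂ → ℂ)
    (hA₁ : ∀ t : ℂ, A₁ t = deriv (fun ε : ℂ => H₁ (ε, t)) 0)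
    (hA₂ : ∀ t : ℂ, A₂ t = deriv (fun ε : ℂ => H₂ (ε, t)) 0)
    (K : ℂ × ℂ → ℂ)
    (hK : ∀ ε t : ℂ, K (ε, t) = H₁ (ε, H₂ (ε, G₁ (ε, G₂ (ε, t))))) :
    ∀ᶠ t in nhds t₀,
      K (0, t) = t ∧
      deriv (fun ε : ℂ => K (ε, t)) 0 = 0 ∧
      iteratedDeriv 2 (fun ε : ℂ => K (ε, t)) 0 =
        2 * (deriv A₁ t * A₂ t - deriv A₂ t * A₁ t) := by
  have hA₁f : A₁ = fun y => deriv (fun ε : ℂ => H₁ (ε, y)) 0 := funext hA₁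
  have hA₂f : A₂ = fun y => deriv (fun ε : ℂ => H₂ (ε, y)) 0 := funext hA₂
  have hUe : ∀ᶠ p : ℂ × ℂ in nhds ((0:ℂ), t₀), p ∈ U := hU
  obtain ⟨V, hVmem, W, hWmem, hVW⟩ :=
    mem_nhds_prod_iff.mp (hUe.and (hinv₁.and hinv₂))
  have hWe : ∀ᶠ y in nhds t₀, y ∈ W := hWmem
  obtain ⟨W₁, hsub, hop, ht₀⟩ := mem_nhds_iff.mp (hWe.and (hH₁0.and hH₂0))
  have h0V : (0:ℂ) ∈ V := mem_of_mem_nhds hVmem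
  have hVe : ∀ᶠ ε in nhds (0:ℂ), ε ∈ V := hVmem
  -- pointwise facts on W₁
  have hprod : ∀ y ∈ W₁, ∀ ε ∈ V, (ε, y) ∈ U ∧
      (H₁ (ε, G₁ (ε, y)) = y ∧ G₁ (ε, H₁ (ε, y)) = y) ∧
      (H₂ (ε, G₂ (ε, y)) = y ∧ G₂ (ε, H₂ (ε, y)) = y) := by
    intro y hy ε hε
    exact hVW ⟨hε, (hsub hy).1⟩
  have hH₁y : ∀ y ∈ W₁, H₁ (0, y) = y := fun y hy => (hsub hy).2.1
  have hH₂y : ∀ y ∈ W₁, H₂ (0, y) = y := fun y hy => (hsub hy).2.2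
  have hG₁y : ∀ y ∈ W₁, G₁ (0, y) = y := by
    intro y hy
    have h : G₁ (0, H₁ (0, y)) = y := (hprod y hy 0 h0V).2.1.2
    rwa [hH₁y y hy] at h
  have hG₂y : ∀ y ∈ W₁, G₂ (0, y) = y := by
    intro y hy
    have h : G₂ (0, H₂ (0, y)) = y := (hprod y hy 0 h0V).2.2.2
    rwa [hH₂y y hy] at h
  have hUy : ∀ y ∈ W₁, ((0:ℂ), y) ∈ U := fun y hy => (hprod y hy 0 h0V).1
  -- derivatives of the inverse families
  have keyG₁ : ∀ y ∈ W₁,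
      deriv (fun ε : ℂ => G₁ (ε, y)) 0 = -A₁ y ∧
      iteratedDeriv 2 (fun ε : ℂ => G₁ (ε, y)) 0
        = 2 * deriv A₁ y * A₁ y - iteratedDeriv 2 (fun ε : ℂ => H₁ (ε, y)) 0 := by
    intro y hy
    have hsG : AnalyticAt ℂ (fun ε : ℂ => G₁ (ε, y)) 0 :=
      (hG₁ _ (hUy y hy)).curry_left
    have hFid : ∀ᶠ z in nhds y, H₁ (0, z) = z := by
      filter_upwards [hop.mem_nhds hy] with z hz using hH₁y z hz
    have hj := jet (F := H₁) (s := fun ε : ℂ => G₁ (ε, y))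
      (hH₁ _ (hUy y hy)) hFid hsG (hG₁y y hy)
    have hj1 : deriv (fun ε : ℂ => H₁ (ε, G₁ (ε, y))) 0
        = deriv (fun ε : ℂ => H₁ (ε, y)) 0 + deriv (fun ε : ℂ => G₁ (ε, y)) 0 := hj.1
    have hj2 : iteratedDeriv 2 (fun ε : ℂ => H₁ (ε, G₁ (ε, y))) 0
        = iteratedDeriv 2 (fun ε : ℂ => H₁ (ε, y)) 0
          + 2 * deriv (fun z => deriv (fun ε : ℂ => H₁ (ε, z)) 0) y
              * deriv (fun ε : ℂ => G₁ (ε, y)) 0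
          + iteratedDeriv 2 (fun ε : ℂ => G₁ (ε, y)) 0 := hj.2
    have hconst : (fun ε : ℂ => H₁ (ε, G₁ (ε, y))) =ᶠ[𝓝 (0:ℂ)] fun _ => y := by
      filter_upwards [hVe] with ε hε using (hprod y hy ε hε).2.1.1
    obtain ⟨hc1, hc2⟩ := const_jet hconst
    have hd : deriv (fun ε : ℂ => G₁ (ε, y)) 0 = -A₁ y := by
      rw [hA₁ y]; linear_combination hc1 - hj1
    refine ⟨hd, ?_⟩
    rw [hd, ← hA₁f] at hj2
    linear_combination hc2 - hj2
  have keyG₂ : ∀ y ∈ W₁,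
      deriv (fun ε : ℂ => G₂ (ε, y)) 0 = -A₂ y ∧
      iteratedDeriv 2 (fun ε : ℂ => G₂ (ε, y)) 0
        = 2 * deriv A₂ y * A₂ y - iteratedDeriv 2 (fun ε : ℂ => H₂ (ε, y)) 0 := by
    intro y hy
    have hsG : AnalyticAt ℂ (fun ε : ℂ => G₂ (ε, y)) 0 :=
      (hG₂ _ (hUy y hy)).curry_left
    have hFid : ∀ᶠ z in nhds y, H₂ (0, z) = z := by
      filter_upwards [hop.mem_nhds hy] with z hz using hH₂y z hz
    have hj := jet (F := H₂) (s := fun ε : ℂ => G₂ (ε, y))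
      (hH₂ _ (hUy y hy)) hFid hsG (hG₂y y hy)
    have hj1 : deriv (fun ε : ℂ => H₂ (ε, G₂ (ε, y))) 0
        = deriv (fun ε : ℂ => H₂ (ε, y)) 0 + deriv (fun ε : ℂ => G₂ (ε, y)) 0 := hj.1
    have hj2 : iteratedDeriv 2 (fun ε : ℂ => H₂ (ε, G₂ (ε, y))) 0
        = iteratedDeriv 2 (fun ε : ℂ => H₂ (ε, y)) 0
          + 2 * deriv (fun z => deriv (fun ε : ℂ => H₂ (ε, z)) 0) y
              * deriv (fun ε : ℂ => G₂ (ε, y)) 0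
          + iteratedDeriv 2 (fun ε : ℂ => G₂ (ε, y)) 0 := hj.2
    have hconst : (fun ε : ℂ => H₂ (ε, G₂ (ε, y))) =ᶠ[𝓝 (0:ℂ)] fun _ => y := by
      filter_upwards [hVe] with ε hε using (hprod y hy ε hε).2.2.1
    obtain ⟨hc1, hc2⟩ := const_jet hconst
    have hd : deriv (fun ε : ℂ => G₂ (ε, y)) 0 = -A₂ y := by
      rw [hA₂ y]; linear_combination hc1 - hj1
    refine ⟨hd, ?_⟩
    rw [hd, ← hA₂f] at hj2
    linear_combination hc2 - hj2
  -- conclusion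
  filter_upwards [hop.mem_nhds ht₀] with t ht
  have hWev : ∀ᶠ z in nhds t, z ∈ W₁ := hop.mem_nhds ht
  -- value at ε = 0
  have hval : K (0, t) = t := by
    rw [hK, hG₂y t ht, hG₁y t ht, hH₂y t ht, hH₁y t ht]
  -- analyticity of the successive curves
  have hs₂ : AnalyticAt ℂ (fun ε : ℂ => G₂ (ε, t)) 0 := (hG₂ _ (hUy t ht)).curry_left
  have haG₁ : AnalyticAt ℂ G₁ ((0:ℂ), G₂ (0, t)) := by
    rw [hG₂y t ht]; exact hG₁ _ (hUy t ht)
  have hs₁ : AnalyticAt ℂ (fun ε : ℂ => G₁ (ε, G₂ (ε, t))) 0 :=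
    haG₁.comp₂ analyticAt_id hs₂
  have haH₂ : AnalyticAt ℂ H₂ ((0:ℂ), G₁ (0, G₂ (0, t))) := by
    rw [hG₂y t ht, hG₁y t ht]; exact hH₂ _ (hUy t ht)
  have hs₃ : AnalyticAt ℂ (fun ε : ℂ => H₂ (ε, G₁ (ε, G₂ (ε, t)))) 0 :=
    haH₂.comp₂ analyticAt_id hs₁
  -- identity neighborhoods
  have hidG₁ : ∀ᶠ z in nhds t, G₁ (0, z) = z := by
    filter_upwards [hWev] with z hz using hG₁y z hz
  have hidH₁ : ∀ᶠ z in nhds t, H₁ (0, z) = z := by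
    filter_upwards [hWev] with z hz using hH₁y z hz
  have hidH₂ : ∀ᶠ z in nhds t, H₂ (0, z) = z := by
    filter_upwards [hWev] with z hz using hH₂y z hz
  -- the three jet steps
  have hjG : AnalyticAt ℂ G₁ ((0:ℂ), t) := hG₁ _ (hUy t ht)
  have hj2 := jet (F := G₁) (s := fun ε : ℂ => G₂ (ε, t)) hjG hidG₁ hs₂ (hG₂y t ht)
  have hs₁0 : (fun ε : ℂ => G₁ (ε, G₂ (ε, t))) 0 = t := by
    show G₁ (0, G₂ (0, t)) = t
    rw [hG₂y t ht, hG₁y t ht]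
  have hj3 := jet (F := H₂) (s := fun ε : ℂ => G₁ (ε, G₂ (ε, t)))
    (hH₂ _ (hUy t ht)) hidH₂ hs₁ hs₁0
  have hs₃0 : (fun ε : ℂ => H₂ (ε, G₁ (ε, G₂ (ε, t)))) 0 = t := by
    show H₂ (0, G₁ (0, G₂ (0, t))) = t
    rw [hG₂y t ht, hG₁y t ht, hH₂y t ht]
  have hj4 := jet (F := H₁) (s := fun ε : ℂ => H₂ (ε, G₁ (ε, G₂ (ε, t))))
    (hH₁ _ (hUy t ht)) hidH₁ hs₃ hs₃0
  -- clean restatements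
  have e2a : deriv (fun ε : ℂ => G₁ (ε, G₂ (ε, t))) 0
      = deriv (fun ε : ℂ => G₁ (ε, t)) 0 + deriv (fun ε : ℂ => G₂ (ε, t)) 0 := hj2.1
  have e3a : deriv (fun ε : ℂ => H₂ (ε, G₁ (ε, G₂ (ε, t)))) 0
      = deriv (fun ε : ℂ => H₂ (ε, t)) 0
        + deriv (fun ε : ℂ => G₁ (ε, G₂ (ε, t))) 0 := hj3.1
  have e4a : deriv (fun ε : ℂ => H₁ (ε, H₂ (ε, G₁ (ε, G₂ (ε, t))))) 0
      = deriv (fun ε : ℂ => H₁ (ε, t)) 0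
        + deriv (fun ε : ℂ => H₂ (ε, G₁ (ε, G₂ (ε, t)))) 0 := hj4.1
  have hKfun : (fun ε : ℂ => K (ε, t)) = fun ε : ℂ => H₁ (ε, H₂ (ε, G₁ (ε, G₂ (ε, t)))) :=
    funext fun ε => hK ε t
  have hD1 : deriv (fun ε : ℂ => G₂ (ε, t)) 0 = -A₂ t := (keyG₂ t ht).1
  have hdG₁ : deriv (fun ε : ℂ => G₁ (ε, t)) 0 = -A₁ t := (keyG₁ t ht).1
  have hfirst : deriv (fun ε : ℂ => K (ε, t)) 0 = 0 := by
    rw [hKfun, e4a, e3a, e2a, hD1, hdG₁, ← hA₁ t, ← hA₂ t]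
    ring
  refine ⟨hval, hfirst, ?_⟩
  -- second derivatives
  have hderG₁ : deriv (fun y => deriv (fun ε : ℂ => G₁ (ε, y)) 0) t = -deriv A₁ t := by
    have hev : (fun y => deriv (fun ε : ℂ => G₁ (ε, y)) 0) =ᶠ[nhds t] fun y => -A₁ y := by
      filter_upwards [hWev] with z hz using (keyG₁ z hz).1
    rw [hev.deriv_eq, deriv.fun_neg]
  have e2b : iteratedDeriv 2 (fun ε : ℂ => G₁ (ε, G₂ (ε, t))) 0
      = iteratedDeriv 2 (fun ε : ℂ => G₁ (ε, t)) 0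
        + 2 * deriv (fun y => deriv (fun ε : ℂ => G₁ (ε, y)) 0) t
            * deriv (fun ε : ℂ => G₂ (ε, t)) 0
        + iteratedDeriv 2 (fun ε : ℂ => G₂ (ε, t)) 0 := hj2.2
  have e3b : iteratedDeriv 2 (fun ε : ℂ => H₂ (ε, G₁ (ε, G₂ (ε, t)))) 0
      = iteratedDeriv 2 (fun ε : ℂ => H₂ (ε, t)) 0
        + 2 * deriv (fun y => deriv (fun ε : ℂ => H₂ (ε, y)) 0) t
            * deriv (fun ε : ℂ => G₁ (ε, G₂ (ε, t))) 0
        + iteratedDeriv 2 (fun ε : ℂ => G₁ (ε, G₂ (ε, t))) 0 := hj3.2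
  have e4b : iteratedDeriv 2 (fun ε : ℂ => H₁ (ε, H₂ (ε, G₁ (ε, G₂ (ε, t))))) 0
      = iteratedDeriv 2 (fun ε : ℂ => H₁ (ε, t)) 0
        + 2 * deriv (fun y => deriv (fun ε : ℂ => H₁ (ε, y)) 0) t
            * deriv (fun ε : ℂ => H₂ (ε, G₁ (ε, G₂ (ε, t)))) 0
        + iteratedDeriv 2 (fun ε : ℂ => H₂ (ε, G₁ (ε, G₂ (ε, t)))) 0 := hj4.2
  have hS1 := (keyG₂ t ht).2
  have hSG₁ := (keyG₁ t ht).2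
  -- substitute values
  rw [hKfun, e4b, e3b, e2b, e3a, e2a, hS1, hSG₁, hderG₁, hD1, hdG₁,
    ← hA₁f, ← hA₂f, ← hA₂ t]
  ring
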